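/- Let G be a finite cyclic group whose order n = p·q is a product of two coprime positive integers. Then the discrete logarithm in G reduces to discrete logarithms in its subgroups of orders p and q: if g generates G, then for any h ∈ G and exponents a, b with h^q = (g^q)^a in the subgroup of order p and h^p = (g^p)^b in the subgroup of order q, the unique x mod n with x ≡ a mod p and x ≡ b mod q satisfies h = g^x. -/
import Mathlib


theorem stmt_17 {G : Type*} [Group G] [Finite G]
    (p q : ℕ) (hp : 0 < p) (hq : 0 < q) (hpq : Nat.Coprime p q)
    (hcard : Nat.card G = p * q)
    (g : G) (hg : ∀ y : G, y ∈ Subgroup.zpowers g)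
    (h : G) (a b x : ℕ)
    (ha : h ^ q = (g ^ q) ^ a) (hb : h ^ p = (g ^ p) ^ b)
    (hxa : x ≡ a [MOD p]) (hxb : x ≡ b [MOD q]) :
    h = g ^ x := by
  have horder : orderOf g = p * q := by
    rw [← hcard]
    exact orderOf_eq_card_of_forall_mem_zpowers hg
  obtain ⟨m, hm⟩ := (mem_powers_iff_mem_zpowers (x := g) (y := h)).2 (hg h)
  subst hm
  rw [← pow_mul, ← pow_mul, pow_eq_pow_iff_modEq, horder] at ha hb
  -- ha : m * q ≡ q * a [MOD p * q], hb : m * p ≡ p * b [MOD p * q]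
  have hma : m ≡ a [MOD p] := by
    have h1 : q * m ≡ q * a [MOD p] := by
      have h2 := Nat.ModEq.of_mul_right q ha
      rwa [mul_comm m q] at h2
    exact Nat.ModEq.cancel_left_of_coprime hpq h1
  have hmb : m ≡ b [MOD q] := by
    have h1 : p * m ≡ p * b [MOD q] := by
      have h2 := Nat.ModEq.of_mul_left p hb
      rwa [mul_comm m p] at h2
    exact Nat.ModEq.cancel_left_of_coprime hpq.symm h1
  have hxm : x ≡ m [MOD p * q] :=
    (Nat.modEq_and_modEq_iff_modEq_mul hpq).1 ⟨hxa.trans hma.symm, hxb.trans hmb.symm⟩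
  rw [pow_eq_pow_iff_modEq, horder]
  exact hxm.symm
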